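/- arXiv:1303.6642 — 2 statements merged into one kernel-verified Lean document; each statement's English description precedes it below -/
import Mathlib

section
/- Let G be a finite simple graph on vertices V = {x_1, ..., x_n} with cover ideal J = J(G) ⊆ S = K[x_1, ..., x_n], and let m = x_1 x_2 ⋯ x_n. Then G is bipartite (i.e., 2-colorable) if and only if m ∈ J^2. -/
open MvPolynomial Pointwise

/-- A finite simple graph on vertex set `Fin n`, presented as a hypergraph all of whose
edges have cardinality exactly two. -/
structure GraphOn (n : ℕ) where
  edges : Finset (Finset (Fin n))
  card_eq : ∀ e ∈ edges, e.card = 2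

/-- `w` is a vertex cover of `G`: it meets every edge. -/
def IsCover {n : ℕ} (G : GraphOn n) (w : Finset (Fin n)) : Prop :=
  ∀ e ∈ G.edges, (w ∩ e).Nonempty

/-- The cover ideal of `G`, generated by the squarefree monomials corresponding to
vertex covers. -/
noncomputable def coverIdeal {n : ℕ} (K : Type*) [Field K] (G : GraphOn n) :
    Ideal (MvPolynomial (Fin n) K) :=
  Ideal.span {m | ∃ w : Finset (Fin n), IsCover G w ∧ m = ∏ i ∈ w, X i}

/-- `G` is bipartite: it is `2`-colorable. -/
def IsBipartite {n : ℕ} (G : GraphOn n) : Prop :=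
  ∃ c : Fin n → Fin 2, ∀ e ∈ G.edges, ∃ u ∈ e, ∃ v ∈ e, c u ≠ c v

lemma prodX_eq {n : ℕ} (K : Type*) [Field K] (w : Finset (Fin n)) :
    (∏ i ∈ w, (X i : MvPolynomial (Fin n) K)) =
      monomial (∑ i ∈ w, Finsupp.single i 1) 1 := by
  rw [monomial_sum_one]
  simp [X]

lemma dapp {n : ℕ} (w : Finset (Fin n)) (j : Fin n) :
    (∑ i ∈ w, Finsupp.single i (1 : ℕ)) j = if j ∈ w then 1 else 0 := by
  rw [Finset.sum_apply']
  simp [Finsupp.single_apply, Finset.sum_ite_eq']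

/-- A finite simple graph `G` is bipartite if and only if
`m = x_1 ⋯ x_n` lies in `J(G)^2`. -/
theorem bipartite_iff_mem_coverIdeal_sq {n : ℕ} (K : Type*) [Field K] (G : GraphOn n) :
    IsBipartite G ↔
      (∏ j : Fin n, (X j : MvPolynomial (Fin n) K)) ∈ coverIdeal K G ^ 2 := by
  classical
  have hfin2 : ∀ a : Fin 2, a = 0 ∨ a = 1 := by decide
  constructor
  · rintro ⟨c, hc⟩
    set w0 : Finset (Fin n) := Finset.univ.filter (fun i => c i = 0) with hw0
    set w1 : Finset (Fin n) := Finset.univ.filter (fun i => ¬ c i = 0) with hw1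
    have hcov0 : IsCover G w0 := by
      intro e he
      obtain ⟨u, hu, v, hv, huv⟩ := hc e he
      rcases hfin2 (c u) with h | h
      · exact ⟨u, Finset.mem_inter.2 ⟨by simp [hw0, h], hu⟩⟩
      · rcases hfin2 (c v) with h' | h'
        · exact ⟨v, Finset.mem_inter.2 ⟨by simp [hw0, h'], hv⟩⟩
        · exact absurd (h.trans h'.symm) huv
    have hcov1 : IsCover G w1 := by
      intro e he
      obtain ⟨u, hu, v, hv, huv⟩ := hc e he
      rcases hfin2 (c u) with h | h
      · rcases hfin2 (c v) with h' | h'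
        · exact absurd (h.trans h'.symm) huv
        · exact ⟨v, Finset.mem_inter.2 ⟨by simp [hw1, h'], hv⟩⟩
      · exact ⟨u, Finset.mem_inter.2 ⟨by simp [hw1, h], hu⟩⟩
    have hsplit : (∏ j : Fin n, (X j : MvPolynomial (Fin n) K)) =
        (∏ i ∈ w0, X i) * (∏ i ∈ w1, X i) :=
      (Finset.prod_filter_mul_prod_filter_not Finset.univ _ _).symm
    rw [hsplit, sq]
    exact Ideal.mul_mem_mul (Ideal.subset_span ⟨w0, hcov0, rfl⟩)
      (Ideal.subset_span ⟨w1, hcov1, rfl⟩)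
  · intro hm
    -- rewrite the square as a monomial ideal
    set D : Set (Fin n →₀ ℕ) :=
      {d | ∃ w : Finset (Fin n), IsCover G w ∧ d = ∑ i ∈ w, Finsupp.single i 1} with hD
    have hgen : {m | ∃ w : Finset (Fin n), IsCover G w ∧ m = ∏ i ∈ w, X i} =
        (fun s => monomial s (1 : K)) '' D := by
      ext m
      constructor
      · rintro ⟨w, hw, rfl⟩
        exact ⟨_, ⟨w, hw, rfl⟩, (prodX_eq K w).symm⟩
      · rintro ⟨s, ⟨w, hw, rfl⟩, rfl⟩
        exact ⟨w, hw, (prodX_eq K w).symm⟩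
    have himg : ((fun s => monomial s (1 : K)) '' D) * ((fun s => monomial s (1 : K)) '' D)
        = (fun s => monomial s (1 : K)) '' (D + D) := by
      ext m
      constructor
      · rintro ⟨_, ⟨s, hs, rfl⟩, _, ⟨t, ht, rfl⟩, rfl⟩
        exact ⟨s + t, Set.add_mem_add hs ht, by simp [monomial_mul]⟩
      · rintro ⟨_, ⟨s, hs, t, ht, rfl⟩, rfl⟩
        exact ⟨_, ⟨s, hs, rfl⟩, _, ⟨t, ht, rfl⟩, by simp [monomial_mul]⟩
    rw [sq, coverIdeal, hgen, Ideal.span_mul_span', himg,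
      mem_ideal_span_monomial_image] at hm
    have hT : (∏ j : Fin n, (X j : MvPolynomial (Fin n) K)) =
        monomial (∑ j : Fin n, Finsupp.single j 1) 1 := prodX_eq K Finset.univ
    have hTmem : (∑ j : Fin n, Finsupp.single j (1 : ℕ)) ∈
        (∏ j : Fin n, (X j : MvPolynomial (Fin n) K)).support := by
      rw [hT, support_monomial, if_neg (one_ne_zero)]
      exact Finset.mem_singleton_self _
    obtain ⟨s, hsD, hle⟩ := hm _ hTmem
    obtain ⟨a, ⟨w, hw, rfl⟩, b, ⟨w', hw', rfl⟩, rfl⟩ := hsD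
    -- w and w' are disjoint covers
    have hdisj : ∀ i : Fin n, ¬(i ∈ w ∧ i ∈ w') := by
      rintro i ⟨hi, hi'⟩
      have := hle i
      rw [Finsupp.add_apply, dapp, dapp, dapp, if_pos hi, if_pos hi',
        if_pos (Finset.mem_univ i)] at this
      omega
    refine ⟨fun i => if i ∈ w then 0 else 1, fun e he => ?_⟩
    obtain ⟨u, hu⟩ := hw e he
    obtain ⟨v, hv⟩ := hw' e he
    rw [Finset.mem_inter] at hu hv
    have hvw : v ∉ w := fun h => hdisj v ⟨h, hv.1⟩
    refine ⟨u, hu.2, v, hv.2, ?_⟩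
    simp [hu.1, hvw]
end

section
/- Let G be a finite simple graph on vertices V = {x_1, ..., x_n} with cover ideal J = J(G) ⊆ S = K[x_1, ..., x_n], and let m = x_1 x_2 ⋯ x_n. Then G contains an odd circuit (a closed walk of odd length, equivalently an odd cycle) if and only if m ∉ J^2. -/
open MvPolynomial

/-- `G` contains an odd circuit: a closed walk of odd length. -/
def HasOddCircuit {n : ℕ} (G : GraphOn n) : Prop :=
  ∃ (ℓ : ℕ) (w : ℕ → Fin n), Odd ℓ ∧ w ℓ = w 0 ∧
    ∀ i < ℓ, ({w i, w (i + 1)} : Finset (Fin n)) ∈ G.edges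

/-! ### Auxiliary combinatorics: walks, connectivity, 2-colorings -/

/-- A walk of length `k` from `a` to `b` in `G`. -/
def WalkN {n : ℕ} (G : GraphOn n) (a b : Fin n) (k : ℕ) : Prop :=
  ∃ w : ℕ → Fin n, w 0 = a ∧ w k = b ∧
    ∀ i < k, ({w i, w (i + 1)} : Finset (Fin n)) ∈ G.edges

namespace WalkNAux

variable {n : ℕ} {G : GraphOn n}

lemma walk_refl (a : Fin n) : WalkN G a a 0 :=
  ⟨fun _ => a, rfl, rfl, fun i hi => absurd hi (Nat.not_lt_zero i)⟩

lemma walk_symm {a b : Fin n} {k : ℕ} (h : WalkN G a b k) : WalkN G b a k := by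
  obtain ⟨w, h0, hk, he⟩ := h
  refine ⟨fun i => w (k - i), by simpa using hk, by simpa using h0, fun i hi => ?_⟩
  have h1 : k - i - 1 + 1 = k - i := by omega
  have h2 : k - (i + 1) = k - i - 1 := by omega
  show ({w (k - i), w (k - (i + 1))} : Finset (Fin n)) ∈ G.edges
  rw [h2, ← h1, Finset.pair_comm]
  exact he (k - i - 1) (by omega)

lemma walk_trans {a b c : Fin n} {k l : ℕ} (h1 : WalkN G a b k) (h2 : WalkN G b c l) :
    WalkN G a c (k + l) := by
  obtain ⟨w1, hw10, hw1k, he1⟩ := h1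
  obtain ⟨w2, hw20, hw2l, he2⟩ := h2
  refine ⟨fun i => if i < k then w1 i else w2 (i - k), ?_, ?_, ?_⟩
  · by_cases h : 0 < k
    · simp [h, hw10]
    · have hk0 : k = 0 := by omega
      subst hk0
      simp only [lt_irrefl, if_false, Nat.sub_zero]
      rw [hw20, ← hw1k, hw10]
  · have : ¬ (k + l < k) := by omega
    simp [this, hw2l]
  · intro i hi
    simp only
    split_ifs with ha hb hb
    · exact he1 i ha
    · have hk : k = i + 1 := by omega
      have : i + 1 - k = 0 := by omega
      rw [this, hw20, ← hw1k, hk]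
      exact he1 i ha
    · omega
    · have h3 : i + 1 - k = (i - k) + 1 := by omega
      rw [h3]
      exact he2 (i - k) (by omega)

lemma walk_single {a b : Fin n} (h : ({a, b} : Finset (Fin n)) ∈ G.edges) :
    WalkN G a b 1 := by
  refine ⟨fun i => if i = 0 then a else b, by simp, by simp, fun i hi => ?_⟩
  have : i = 0 := by omega
  subst this
  simpa using h

lemma walk_snoc {a b c : Fin n} {k : ℕ} (h : WalkN G a b k)
    (he : ({b, c} : Finset (Fin n)) ∈ G.edges) : WalkN G a c (k + 1) :=
  walk_trans h (walk_single he)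

/-- Connectivity. -/
def Conn (G : GraphOn n) (a b : Fin n) : Prop := ∃ k, WalkN G a b k

lemma conn_refl (a : Fin n) : Conn G a a := ⟨0, walk_refl a⟩

lemma conn_symm {a b : Fin n} (h : Conn G a b) : Conn G b a :=
  h.imp fun _ => walk_symm

lemma conn_trans {a b c : Fin n} (h1 : Conn G a b) (h2 : Conn G b c) : Conn G a c := by
  obtain ⟨k, hk⟩ := h1; obtain ⟨l, hl⟩ := h2; exact ⟨k + l, walk_trans hk hl⟩

/-- The connectivity setoid. -/
def connSetoid (G : GraphOn n) : Setoid (Fin n) :=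
  ⟨Conn G, ⟨conn_refl, conn_symm, conn_trans⟩⟩

/-- A representative of the connected component of a vertex. -/
noncomputable def rep (G : GraphOn n) (v : Fin n) : Fin n :=
  (Quotient.mk (connSetoid G) v).out

lemma conn_rep (v : Fin n) : Conn G (rep G v) v :=
  @Quotient.mk_out _ (connSetoid G) v

lemma rep_eq {a b : Fin n} (h : Conn G a b) : rep G a = rep G b :=
  congrArg Quotient.out (Quotient.sound h)

lemma hasOdd_iff : HasOddCircuit G ↔ ∃ (a : Fin n) (k : ℕ), Odd k ∧ WalkN G a a k := by
  constructor
  · rintro ⟨ℓ, w, hodd, hcl, he⟩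
    exact ⟨w 0, ℓ, hodd, w, rfl, hcl, he⟩
  · rintro ⟨a, k, hodd, w, h0, hk, he⟩
    exact ⟨k, w, hodd, by rw [hk, h0], he⟩

lemma edge_ne {a b : Fin n} (h : ({a, b} : Finset (Fin n)) ∈ G.edges) : a ≠ b := by
  intro hab
  have := G.card_eq _ h
  subst hab
  simp at this

/-- If `G` has no odd circuit, it admits a proper 2-coloring. -/
lemma exists_coloring (h : ¬ HasOddCircuit G) :
    ∃ c : Fin n → Prop, ∀ a b : Fin n, ({a, b} : Finset (Fin n)) ∈ G.edges → (c a ↔ ¬ c b) := by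
  have hno : ∀ (a : Fin n) (k : ℕ), Odd k → ¬ WalkN G a a k := by
    intro a k hk hw
    exact h (hasOdd_iff.mpr ⟨a, k, hk, hw⟩)
  refine ⟨fun v => ∃ k, Odd k ∧ WalkN G (rep G v) v k, fun a b he => ?_⟩
  have hconn : Conn G a b := ⟨1, walk_single he⟩
  have hrep : rep G a = rep G b := rep_eq hconn
  have hnot_both : ¬ ((∃ k, Odd k ∧ WalkN G (rep G a) a k) ∧
      (∃ k, Odd k ∧ WalkN G (rep G b) b k)) := by
    rintro ⟨⟨p, hp, hwp⟩, ⟨q, hq, hwq⟩⟩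
    -- closed walk rep → b → a → rep of length q + 1 + p, odd
    have hba : WalkN G b a 1 := walk_single (Finset.pair_comm a b ▸ he)
    have har : WalkN G a (rep G a) p := walk_symm hwp
    have : WalkN G (rep G b) (rep G a) (q + 1 + p) :=
      walk_trans (walk_trans hwq hba) har
    rw [hrep] at this
    refine hno _ _ ?_ this
    rcases hp with ⟨p', rfl⟩
    rcases hq with ⟨q', rfl⟩
    exact ⟨q' + p' + 1, by ring⟩
  have hor : (∃ k, Odd k ∧ WalkN G (rep G a) a k) ∨
      (∃ k, Odd k ∧ WalkN G (rep G b) b k) := by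
    by_contra hcon
    push_neg at hcon
    obtain ⟨hna, hnb⟩ := hcon
    obtain ⟨k, hwk⟩ := conn_rep (G := G) a
    have hke : ¬ Odd k := fun hk => hna k hk hwk
    have : WalkN G (rep G a) b (k + 1) := walk_snoc hwk he
    rw [hrep] at this
    exact hnb (k + 1) (by rw [Nat.odd_add_one]; exact hke) this
  simp only [← hrep] at hnot_both hor ⊢
  constructor
  · intro hA hB
    exact hnot_both ⟨hA, hB⟩
  · intro hB
    rcases hor with hA | hA
    · exact hA
    · exact absurd hA hB

/-- From a proper 2-coloring, a contradiction with an odd circuit. -/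
lemma no_coloring (h : HasOddCircuit G)
    (c : Fin n → Prop)
    (hc : ∀ a b : Fin n, ({a, b} : Finset (Fin n)) ∈ G.edges → (c a ↔ ¬ c b)) : False := by
  obtain ⟨ℓ, w, hodd, hcl, he⟩ := h
  have key : ∀ i ≤ ℓ, (c (w i) ↔ (Even i ↔ c (w 0))) := by
    intro i hi
    induction i with
    | zero => have h0 : Even 0 := Even.zero; tauto
    | succ i ih =>
      have hlt : i < ℓ := by omega
      have hstep := hc (w i) (w (i + 1)) (he i hlt)
      have hih := ih (by omega)
      have hev : Even (i + 1) ↔ ¬ Even i := Nat.even_add_one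
      tauto
  have hfin := key ℓ le_rfl
  rw [hcl] at hfin
  have hne : ¬ Even ℓ := Nat.not_even_iff_odd.mpr hodd
  tauto

/-- Proper 2-colorings correspond to pairs of disjoint vertex covers. -/
lemma coloring_iff_covers :
    (∃ c : Fin n → Prop, ∀ a b : Fin n, ({a, b} : Finset (Fin n)) ∈ G.edges → (c a ↔ ¬ c b)) ↔
      ∃ w₁ w₂ : Finset (Fin n), IsCover G w₁ ∧ IsCover G w₂ ∧ Disjoint w₁ w₂ := by
  classical
  constructor
  · rintro ⟨c, hc⟩
    refine ⟨Finset.univ.filter (fun v => c v), Finset.univ.filter (fun v => ¬ c v), ?_, ?_, ?_⟩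
    · intro e hee
      obtain ⟨a, b, hab, rfl⟩ := Finset.card_eq_two.mp (G.card_eq e hee)
      by_cases hca : c a
      · exact ⟨a, by simp [hca]⟩
      · have hcb : c b := by have := hc a b hee; tauto
        exact ⟨b, by simp [hcb]⟩
    · intro e hee
      obtain ⟨a, b, hab, rfl⟩ := Finset.card_eq_two.mp (G.card_eq e hee)
      by_cases hca : c a
      · have hcb : ¬ c b := (hc a b hee).mp hca
        exact ⟨b, by simp [hcb]⟩
      · exact ⟨a, by simp [hca]⟩
    · rw [Finset.disjoint_left]
      intro a ha hb
      simp only [Finset.mem_filter] at ha hb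
      exact hb.2 ha.2
  · rintro ⟨w₁, w₂, h1, h2, hd⟩
    refine ⟨fun v => v ∈ w₁, fun a b he => ?_⟩
    have hab : a ≠ b := edge_ne he
    have hm1 := h1 _ he
    have hm2 := h2 _ he
    constructor
    · intro ha hb
      obtain ⟨x, hx⟩ := hm2
      simp only [Finset.mem_inter, Finset.mem_insert, Finset.mem_singleton] at hx
      rcases hx.2 with rfl | rfl
      · exact Finset.disjoint_left.mp hd ha hx.1
      · exact Finset.disjoint_left.mp hd hb hx.1
    · intro hb
      by_contra ha
      obtain ⟨x, hx⟩ := hm1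
      simp only [Finset.mem_inter, Finset.mem_insert, Finset.mem_singleton] at hx
      rcases hx.2 with rfl | rfl
      · exact ha hx.1
      · exact hb hx.1

end WalkNAux

/-! ### Auxiliary algebra: membership in the square of the cover ideal -/

section Alg

variable {n : ℕ} {K : Type*} [Field K] (G : GraphOn n)

lemma prod_X_eq (w : Finset (Fin n)) :
    (∏ i ∈ w, (X i : MvPolynomial (Fin n) K)) =
      monomial (∑ i ∈ w, Finsupp.single i 1) 1 := by
  classical
  induction w using Finset.induction with
  | empty => simp
  | insert _ _ h ih =>
    rw [Finset.prod_insert h, Finset.sum_insert h, ih, ← pow_one (X _),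
      X_pow_eq_monomial, monomial_mul, one_mul]

lemma ind_apply (w : Finset (Fin n)) (j : Fin n) :
    (∑ i ∈ w, Finsupp.single i (1 : ℕ)) j = if j ∈ w then 1 else 0 := by
  classical
  rw [Finset.sum_apply']
  simp [Finsupp.single_apply]

lemma mem_sq_iff :
    (∏ j : Fin n, (X j : MvPolynomial (Fin n) K)) ∈ coverIdeal K G ^ 2 ↔
      ∃ w₁ w₂ : Finset (Fin n), IsCover G w₁ ∧ IsCover G w₂ ∧ Disjoint w₁ w₂ := by
  classical
  have hspan : coverIdeal K G ^ 2 = Ideal.span ((fun d => monomial d (1 : K)) ''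
      {d | ∃ w₁ w₂ : Finset (Fin n), IsCover G w₁ ∧ IsCover G w₂ ∧
        d = (∑ i ∈ w₁, Finsupp.single i 1) + ∑ i ∈ w₂, Finsupp.single i 1}) := by
    rw [pow_two, coverIdeal, Ideal.span_mul_span']
    congr 1
    ext p
    constructor
    · rintro ⟨p₁, ⟨w₁, hc1, rfl⟩, p₂, ⟨w₂, hc2, rfl⟩, rfl⟩
      exact ⟨_, ⟨w₁, w₂, hc1, hc2, rfl⟩,
        by simp [prod_X_eq, monomial_mul]⟩
    · rintro ⟨d, ⟨w₁, w₂, hc1, hc2, rfl⟩, rfl⟩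
      exact ⟨_, ⟨w₁, hc1, rfl⟩, _, ⟨w₂, hc2, rfl⟩,
        by simp [prod_X_eq, monomial_mul]⟩
  rw [hspan, show (∏ j : Fin n, (X j : MvPolynomial (Fin n) K)) =
    monomial (∑ i : Fin n, Finsupp.single i 1) 1 from prod_X_eq _,
    mem_ideal_span_monomial_image]
  rw [support_monomial, if_neg (one_ne_zero)]
  simp only [Finset.mem_singleton, forall_eq]
  constructor
  · rintro ⟨si, ⟨w₁, w₂, h1, h2, rfl⟩, hle⟩
    refine ⟨w₁, w₂, h1, h2, Finset.disjoint_left.mpr fun a ha1 ha2 => ?_⟩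
    have h := Finsupp.le_def.mp hle a
    rw [Finsupp.add_apply, ind_apply, ind_apply, ind_apply, if_pos ha1, if_pos ha2,
      if_pos (Finset.mem_univ a)] at h
    omega
  · rintro ⟨w₁, w₂, h1, h2, hd⟩
    refine ⟨_, ⟨w₁, w₂, h1, h2, rfl⟩, ?_⟩
    rw [Finsupp.le_def]
    intro a
    rw [Finsupp.add_apply, ind_apply, ind_apply, ind_apply, if_pos (Finset.mem_univ a)]
    have hdd : a ∈ w₁ → a ∉ w₂ := fun h1 => Finset.disjoint_left.mp hd h1
    split_ifs <;> simp_all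

end Alg

/-- A finite simple graph `G` contains an odd circuit if and only if
`m = x_1 ⋯ x_n` does not lie in `J(G)^2`. -/
theorem hasOddCircuit_iff_not_mem_coverIdeal_sq {n : ℕ} (K : Type*) [Field K] (G : GraphOn n) :
    HasOddCircuit G ↔
      (∏ j : Fin n, (X j : MvPolynomial (Fin n) K)) ∉ coverIdeal K G ^ 2 := by
  rw [mem_sq_iff G, ← WalkNAux.coloring_iff_covers]
  constructor
  · intro h hc
    obtain ⟨c, hc⟩ := hc
    exact WalkNAux.no_coloring h c hc
  · intro h
    by_contra hnoc
    exact h (WalkNAux.exists_coloring hnoc)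
end
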